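/- Let S₁, S₂ be doubly commuting isometries on H (S₁ S₂ = S₂ S₁ and S₁* S₂ = S₂ S₁*) and T a partial isometry with Sᵢ* T Sᵢ = T for i = 1, 2, satisfying S Tᵢ-type relations Sᵢ T* T = T* Sᵢ T and Sᵢ T T* = T Sᵢ T*. Then S₁* T T* S₁ S₂* T T* S₂ = T T* = S₂* T T* S₂ S₁* T T* S₁. -/
import Mathlib


open ContinuousLinearMap

set_option maxHeartbeats 1000000 in
theorem doubly_commuting_compression_identity {H : Type*} [NormedAddCommGroup H]
    [InnerProductSpace ℂ H] [CompleteSpace H] (S₁ S₂ T : H →L[ℂ] H)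
    (hS₁ : adjoint S₁ * S₁ = 1) (hS₂ : adjoint S₂ * S₂ = 1)
    (hcomm : S₁ * S₂ = S₂ * S₁) (hdc : adjoint S₁ * S₂ = S₂ * adjoint S₁)
    (hTpi : T * adjoint T * T = T)
    (hT₁ : adjoint S₁ * T * S₁ = T) (hT₂ : adjoint S₂ * T * S₂ = T)
    (h₁l : S₁ * (adjoint T * T) = adjoint T * (S₁ * T))
    (h₂l : S₂ * (adjoint T * T) = adjoint T * (S₂ * T))
    (h₁r : S₁ * (T * adjoint T) = T * (S₁ * adjoint T))
    (h₂r : S₂ * (T * adjoint T) = T * (S₂ * adjoint T)) :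
    adjoint S₁ * (T * adjoint T) * S₁ * (adjoint S₂ * (T * adjoint T) * S₂) = T * adjoint T ∧
      T * adjoint T =
        adjoint S₂ * (T * adjoint T) * S₂ * (adjoint S₁ * (T * adjoint T) * S₁) := by
  -- adjoints of the hypotheses
  have hdc' : adjoint S₂ * S₁ = S₁ * adjoint S₂ := by
    have := congrArg star hdc
    simpa [← star_eq_adjoint, star_mul] using this
  have tstar : adjoint T * (T * adjoint T) = adjoint T := by
    have := congrArg star hTpi
    simp only [← star_eq_adjoint, star_mul, star_star, mul_assoc] at this
    simpa [← star_eq_adjoint, mul_assoc] using this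
  have hT₁' : adjoint S₁ * (adjoint T * S₁) = adjoint T := by
    have := congrArg star hT₁
    simp only [← star_eq_adjoint, star_mul, star_star, mul_assoc] at this
    simpa [← star_eq_adjoint, mul_assoc] using this
  have hT₂' : adjoint S₂ * (adjoint T * S₂) = adjoint T := by
    have := congrArg star hT₂
    simp only [← star_eq_adjoint, star_mul, star_star, mul_assoc] at this
    simpa [← star_eq_adjoint, mul_assoc] using this
  -- T T* Sᵢ* = T Sᵢ* T*
  have h₁r' : T * (adjoint T * adjoint S₁) = T * (adjoint S₁ * adjoint T) := by
    have := congrArg star h₁r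
    simp only [← star_eq_adjoint, star_mul, star_star, mul_assoc] at this
    simpa [← star_eq_adjoint, mul_assoc] using this
  have h₂r' : T * (adjoint T * adjoint S₂) = T * (adjoint S₂ * adjoint T) := by
    have := congrArg star h₂r
    simp only [← star_eq_adjoint, star_mul, star_star, mul_assoc] at this
    simpa [← star_eq_adjoint, mul_assoc] using this
  -- lifted, ∀-quantified versions for rewriting in right-associated form
  have e1 : ∀ x : H →L[ℂ] H, S₁ * (adjoint S₂ * x) = adjoint S₂ * (S₁ * x) := by
    intro x
    have := congrArg (· * x) hdc'.symm
    simpa [mul_assoc] using this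
  have e1' : ∀ x : H →L[ℂ] H, S₂ * (adjoint S₁ * x) = adjoint S₁ * (S₂ * x) := by
    intro x
    have := congrArg (· * x) hdc
    simpa [mul_assoc] using this.symm
  have e2 : ∀ x : H →L[ℂ] H,
      T * (adjoint T * (adjoint S₂ * x)) = T * (adjoint S₂ * (adjoint T * x)) := by
    intro x
    have := congrArg (· * x) h₂r'
    simpa [mul_assoc] using this
  have e2' : ∀ x : H →L[ℂ] H,
      T * (adjoint T * (adjoint S₁ * x)) = T * (adjoint S₁ * (adjoint T * x)) := by
    intro x
    have := congrArg (· * x) h₁r'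
    simpa [mul_assoc] using this
  -- T* Sᵢ T T* = Sᵢ T*
  have e3base : adjoint T * (S₁ * (T * adjoint T)) = S₁ * adjoint T := by
    have h : adjoint T * (S₁ * T) * adjoint T = S₁ * (adjoint T * T) * adjoint T := by
      rw [h₁l]
    calc adjoint T * (S₁ * (T * adjoint T))
        = adjoint T * (S₁ * T) * adjoint T := by simp [mul_assoc]
      _ = S₁ * (adjoint T * T) * adjoint T := h
      _ = S₁ * (adjoint T * (T * adjoint T)) := by simp [mul_assoc]
      _ = S₁ * adjoint T := by rw [tstar]
  have e3base' : adjoint T * (S₂ * (T * adjoint T)) = S₂ * adjoint T := by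
    have h : adjoint T * (S₂ * T) * adjoint T = S₂ * (adjoint T * T) * adjoint T := by
      rw [h₂l]
    calc adjoint T * (S₂ * (T * adjoint T))
        = adjoint T * (S₂ * T) * adjoint T := by simp [mul_assoc]
      _ = S₂ * (adjoint T * T) * adjoint T := h
      _ = S₂ * (adjoint T * (T * adjoint T)) := by simp [mul_assoc]
      _ = S₂ * adjoint T := by rw [tstar]
  have e3 : ∀ x : H →L[ℂ] H,
      adjoint T * (S₁ * (T * (adjoint T * x))) = S₁ * (adjoint T * x) := by
    intro x
    have := congrArg (· * x) e3base
    simpa [mul_assoc] using this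
  have e3' : ∀ x : H →L[ℂ] H,
      adjoint T * (S₂ * (T * (adjoint T * x))) = S₂ * (adjoint T * x) := by
    intro x
    have := congrArg (· * x) e3base'
    simpa [mul_assoc] using this
  have e6 : ∀ x : H →L[ℂ] H, adjoint S₁ * (T * (S₁ * x)) = T * x := by
    intro x
    have := congrArg (· * x) hT₁
    simpa [mul_assoc] using this
  have e6' : ∀ x : H →L[ℂ] H, adjoint S₂ * (T * (S₂ * x)) = T * x := by
    intro x
    have := congrArg (· * x) hT₂
    simpa [mul_assoc] using this
  constructor
  · calc adjoint S₁ * (T * adjoint T) * S₁ * (adjoint S₂ * (T * adjoint T) * S₂)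
        = adjoint S₁ * (T * (adjoint T * (S₁ * (adjoint S₂ * (T * (adjoint T * S₂)))))) := by
          simp [mul_assoc]
      _ = adjoint S₁ * (T * (adjoint T * (adjoint S₂ * (S₁ * (T * (adjoint T * S₂)))))) := by
          rw [e1]
      _ = adjoint S₁ * (T * (adjoint S₂ * (adjoint T * (S₁ * (T * (adjoint T * S₂)))))) := by
          rw [e2]
      _ = adjoint S₁ * (T * (adjoint S₂ * (S₁ * (adjoint T * S₂)))) := by
          rw [e3]
      _ = adjoint S₁ * (T * (S₁ * (adjoint S₂ * (adjoint T * S₂)))) := by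
          rw [← e1]
      _ = adjoint S₁ * (T * (S₁ * adjoint T)) := by rw [hT₂']
      _ = T * adjoint T := e6 (adjoint T)
  · symm
    calc adjoint S₂ * (T * adjoint T) * S₂ * (adjoint S₁ * (T * adjoint T) * S₁)
        = adjoint S₂ * (T * (adjoint T * (S₂ * (adjoint S₁ * (T * (adjoint T * S₁)))))) := by
          simp [mul_assoc]
      _ = adjoint S₂ * (T * (adjoint T * (adjoint S₁ * (S₂ * (T * (adjoint T * S₁)))))) := by
          rw [e1']
      _ = adjoint S₂ * (T * (adjoint S₁ * (adjoint T * (S₂ * (T * (adjoint T * S₁)))))) := by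
          rw [e2']
      _ = adjoint S₂ * (T * (adjoint S₁ * (S₂ * (adjoint T * S₁)))) := by
          rw [e3']
      _ = adjoint S₂ * (T * (S₂ * (adjoint S₁ * (adjoint T * S₁)))) := by
          rw [← e1']
      _ = adjoint S₂ * (T * (S₂ * adjoint T)) := by rw [hT₁']
      _ = T * adjoint T := e6' (adjoint T)
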